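/- (Rado) Let A be any n×n complex matrix with eigenvalues λ₁, ..., λ_n (counted with multiplicity). Let X₁, X₂, ..., X_r be r eigenvectors of A corresponding respectively to the eigenvalues λ₁, ..., λ_r, with r ≤ n, and let X = [X₁|X₂|...|X_r] be the n×r matrix whose columns are X₁, ..., X_r. Then for any r×n matrix C, the matrix A + XC has eigenvalues γ₁, ..., γ_r, λ_{r+1}, ..., λ_n (counted with multiplicity), where γ₁, ..., γ_r are the eigenvalues of the r×r matrix Λ + CX, with Λ = diag(λ₁, ..., λ_r). -/

import Mathlib

open Matrix Polynomial

/-- Determinant identity over a field. -/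
lemma det_aux {K : Type*} [Field K] {n r : ℕ}
    (P : Matrix (Fin n) (Fin n) K) (Q : Matrix (Fin r) (Fin r) K)
    (X : Matrix (Fin n) (Fin r) K) (C : Matrix (Fin r) (Fin n) K)
    (hP : IsUnit P.det) (hQ : IsUnit Q.det) (h : P * X = X * Q) :
    (P - X * C).det * Q.det = P.det * (Q - C * X).det := by
  have hPinvX : P⁻¹ * X = X * Q⁻¹ := by
    have : P⁻¹ * (P * X) * Q⁻¹ = P⁻¹ * (X * Q) * Q⁻¹ := by rw [h]
    rw [← Matrix.mul_assoc, Matrix.nonsing_inv_mul P hP, Matrix.one_mul,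
      Matrix.mul_assoc, Matrix.mul_assoc, Matrix.mul_nonsing_inv Q hQ, Matrix.mul_one] at this
    exact this.symm
  have hid : P * (P⁻¹ * X) = X := by
    rw [← Matrix.mul_assoc, Matrix.mul_nonsing_inv P hP, Matrix.one_mul]
  have h1 : P - X * C = P * (1 - (P⁻¹ * X) * C) := by
    rw [Matrix.mul_sub, Matrix.mul_one, ← Matrix.mul_assoc, hid]
  have h2 : (1 - (P⁻¹ * X) * C).det = (1 - C * (P⁻¹ * X)).det :=
    Matrix.det_one_sub_mul_comm _ _
  have h3 : 1 - C * (P⁻¹ * X) = (Q - C * X) * Q⁻¹ := by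
    rw [hPinvX, Matrix.sub_mul, Matrix.mul_nonsing_inv Q hQ, Matrix.mul_assoc]
  have h4 : Q⁻¹.det * Q.det = 1 := Matrix.det_nonsing_inv_mul_det Q hQ
  rw [h1, Matrix.det_mul, h2, h3, Matrix.det_mul, mul_assoc, mul_assoc, h4, mul_one]

set_option maxHeartbeats 1000000 in
/-- Key polynomial identity. -/
lemma charpoly_identity {n r : ℕ}
    (A : Matrix (Fin n) (Fin n) ℂ) (L : Matrix (Fin r) (Fin r) ℂ)
    (X : Matrix (Fin n) (Fin r) ℂ) (C : Matrix (Fin r) (Fin n) ℂ)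
    (h : A * X = X * L) :
    (A + X * C).charpoly * L.charpoly = A.charpoly * (L + C * X).charpoly := by
  set K := FractionRing ℂ[X]
  set f : ℂ[X] →+* K := algebraMap ℂ[X] K
  have hf : Function.Injective f := IsFractionRing.injective ℂ[X] K
  set g : ℂ →+* K := f.comp (Polynomial.C : ℂ →+* ℂ[X]) with hg
  set P : Matrix (Fin n) (Fin n) K := (charmatrix A).map f with hPdef
  set Q : Matrix (Fin r) (Fin r) K := (charmatrix L).map f with hQdef
  set X' : Matrix (Fin n) (Fin r) K := X.map g with hX'def
  set C' : Matrix (Fin r) (Fin n) K := C.map g with hC'def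
  have hmapP : ∀ (m : ℕ) (M : Matrix (Fin m) (Fin m) ℂ),
      (charmatrix M).map f = Matrix.scalar (Fin m) (f Polynomial.X) - M.map g := by
    intro m M
    ext i j
    by_cases hij : i = j
    · subst hij; simp [charmatrix_apply_eq, g]
    · simp [charmatrix_apply_ne _ _ _ hij, Matrix.scalar_apply,
        Matrix.diagonal_apply_ne _ hij, g]
  have hcomm : P * X' = X' * Q := by
    have hscal1 : (Matrix.scalar (Fin n)) (f Polynomial.X) * X' = f Polynomial.X • X' := by
      ext i j
      rw [Matrix.scalar_apply, Matrix.diagonal_mul]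
      simp
    have hscal2 : X' * (Matrix.scalar (Fin r)) (f Polynomial.X) = f Polynomial.X • X' := by
      ext i j
      rw [Matrix.scalar_apply, Matrix.mul_diagonal]
      simp [mul_comm]
    rw [hPdef, hQdef, hmapP, hmapP, Matrix.sub_mul, Matrix.mul_sub, hscal1, hscal2,
      hX'def, ← Matrix.map_mul, ← Matrix.map_mul, h]
  have hPu : IsUnit P.det := by
    rw [hPdef, ← RingHom.mapMatrix_apply, ← RingHom.map_det]
    have hA : A.charpoly ≠ 0 := A.charpoly_monic.ne_zero
    exact isUnit_iff_ne_zero.mpr ((map_ne_zero_iff f hf).mpr hA)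
  have hQu : IsUnit Q.det := by
    rw [hQdef, ← RingHom.mapMatrix_apply, ← RingHom.map_det]
    have hL : L.charpoly ≠ 0 := L.charpoly_monic.ne_zero
    exact isUnit_iff_ne_zero.mpr ((map_ne_zero_iff f hf).mpr hL)
  have key := det_aux P Q X' C' hPu hQu hcomm
  apply hf
  have e1 : (charmatrix (A + X * C)).map f = P - X' * C' := by
    rw [hPdef, hmapP, hmapP, hX'def, hC'def, ← Matrix.map_mul,
      Matrix.map_add _ (map_add g)]
    abel
  have e2 : (charmatrix (L + C * X)).map f = Q - C' * X' := by
    rw [hQdef, hmapP, hmapP, hX'def, hC'def, ← Matrix.map_mul,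
      Matrix.map_add _ (map_add g)]
    abel
  calc f ((A + X * C).charpoly * L.charpoly)
      = ((charmatrix (A + X * C)).map f).det * ((charmatrix L).map f).det := by
        rw [_root_.map_mul]
        rw [Matrix.charpoly, Matrix.charpoly, RingHom.map_det, RingHom.map_det,
          RingHom.mapMatrix_apply, RingHom.mapMatrix_apply]
    _ = (P - X' * C').det * Q.det := by rw [e1, hQdef]
    _ = P.det * (Q - C' * X').det := key
    _ = ((charmatrix A).map f).det * ((charmatrix (L + C * X)).map f).det := by
        rw [e2, hPdef]
    _ = f (A.charpoly * (L + C * X).charpoly) := by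
        rw [_root_.map_mul]
        rw [Matrix.charpoly, Matrix.charpoly, RingHom.map_det, RingHom.map_det,
          RingHom.mapMatrix_apply, RingHom.mapMatrix_apply]

lemma charpoly_diag_roots {r : ℕ} (d : Fin r → ℂ) :
    (Matrix.diagonal d).charpoly.roots = Finset.univ.val.map d := by
  have h : charmatrix (Matrix.diagonal d)
      = Matrix.diagonal (fun i => (Polynomial.X : ℂ[X]) - Polynomial.C (d i)) := by
    ext i j
    by_cases hij : i = j
    · subst hij; simp [charmatrix_apply_eq]
    · simp [charmatrix_apply_ne _ _ _ hij, Matrix.diagonal_apply_ne _ hij]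
  rw [Matrix.charpoly, h, Matrix.det_diagonal]
  have h2 : ∏ i : Fin r, ((Polynomial.X : ℂ[X]) - Polynomial.C (d i))
      = ((Finset.univ.val.map d).map (fun a => (Polynomial.X : ℂ[X]) - Polynomial.C a)).prod := by
    rw [Multiset.map_map]
    rfl
  rw [h2, Polynomial.roots_multiset_prod_X_sub_C]

/-- Rado's theorem: the eigenvalues of `A + X C` are the eigenvalues of `Λ + C X`
together with `λ_{r+1}, ..., λ_n`. -/
theorem stmt_2 (n r : ℕ) (hr : r ≤ n)
    (A : Matrix (Fin n) (Fin n) ℂ) (lam : Fin n → ℂ)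
    (hspec : A.charpoly.roots = Finset.univ.val.map lam)
    (X : Matrix (Fin n) (Fin r) ℂ)
    (hX : ∀ i : Fin r, (fun j => X j i) ≠ 0)
    (hXeig : ∀ i : Fin r,
      A.mulVec (fun j => X j i) = lam (Fin.castLE hr i) • fun j => X j i)
    (C : Matrix (Fin r) (Fin n) ℂ) :
    (A + X * C).charpoly.roots
      = (Matrix.diagonal (fun i : Fin r => lam (Fin.castLE hr i)) + C * X).charpoly.roots
        + (Finset.univ.filter fun i : Fin n => r ≤ i.val).val.map lam := by
  set L : Matrix (Fin r) (Fin r) ℂ := Matrix.diagonal (fun i : Fin r => lam (Fin.castLE hr i))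
    with hL
  have hAX : A * X = X * L := by
    ext j i
    have hcol := congrFun (hXeig i) j
    simp only [Matrix.mulVec, dotProduct, Pi.smul_apply, smul_eq_mul] at hcol
    simp only [Matrix.mul_apply, hL, Matrix.diagonal_apply]
    rw [Finset.sum_eq_single i]
    · simpa [mul_comm] using hcol
    · intro b _ hb; simp [hb]
    · simp
  have key := charpoly_identity A L X C hAX
  have hne1 : (A + X * C).charpoly ≠ 0 := (A + X * C).charpoly_monic.ne_zero
  have hne2 : L.charpoly ≠ 0 := L.charpoly_monic.ne_zero
  have hne3 : A.charpoly ≠ 0 := A.charpoly_monic.ne_zero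
  have hne4 : (L + C * X).charpoly ≠ 0 := (L + C * X).charpoly_monic.ne_zero
  have hroots : (A + X * C).charpoly.roots + L.charpoly.roots
      = A.charpoly.roots + (L + C * X).charpoly.roots := by
    rw [← Polynomial.roots_mul (mul_ne_zero hne1 hne2), key,
      Polynomial.roots_mul (mul_ne_zero hne3 hne4)]
  have hLroots : L.charpoly.roots
      = Finset.univ.val.map (fun i : Fin r => lam (Fin.castLE hr i)) :=
    charpoly_diag_roots _
  have hcast : (Finset.univ.val : Multiset (Fin r)).map (Fin.castLE hr)
      = (Finset.univ.filter fun i : Fin n => i.val < r).val := by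
    refine (Multiset.Nodup.ext (Multiset.Nodup.map (Fin.castLE_injective hr) Finset.univ.nodup)
      (Finset.univ.filter fun i : Fin n => i.val < r).nodup).mpr ?_
    intro j
    simp only [Multiset.mem_map, Finset.mem_val, Finset.mem_filter, Finset.mem_univ, true_and]
    constructor
    · rintro ⟨i, -, rfl⟩; exact i.isLt
    · rintro hj; exact ⟨⟨j.val, hj⟩, by ext; rfl⟩
  have hsplit : (Finset.univ.val : Multiset (Fin n)).map lam
      = Finset.univ.val.map (fun i : Fin r => lam (Fin.castLE hr i))
        + (Finset.univ.filter fun i : Fin n => r ≤ i.val).val.map lam := by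
    have h1 : (Finset.univ.val : Multiset (Fin n))
        = (Finset.univ.filter fun i : Fin n => i.val < r).val
          + (Finset.univ.filter fun i : Fin n => r ≤ i.val).val := by
      have h2 := Multiset.filter_add_not (fun i : Fin n => i.val < r) Finset.univ.val
      rw [Finset.filter_val, Finset.filter_val]
      conv_lhs => rw [← h2]
      congr 1
      refine Multiset.filter_congr (fun i _ => ?_)
      simp [not_lt]
    rw [h1, Multiset.map_add, ← hcast, Multiset.map_map]
    rfl
  rw [hspec, hsplit, hLroots] at hroots
  have hfin : (A + X * C).charpoly.roots
        + Finset.univ.val.map (fun i : Fin r => lam (Fin.castLE hr i))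
      = ((L + C * X).charpoly.roots
          + (Finset.univ.filter fun i : Fin n => r ≤ i.val).val.map lam)
        + Finset.univ.val.map (fun i : Fin r => lam (Fin.castLE hr i)) := by
    rw [hroots]
    abel
  exact add_right_cancel hfin
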